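/- arXiv:1701.02575 — 4 statements merged into one kernel-verified Lean document; each statement's English description precedes it below -/
import Mathlib

section
/- Let C be a full-dimensional pointed closed convex cone in ℝ^d, let Γ be the set of points of C lying outside some (possibly empty) truncation of C, let V be a countable subset of C, and let U = V + Γ be the Minkowski sum. Then (closure of U) + (interior of C) ⊆ interior of U. -/
open Filter MeasureTheory
open scoped Pointwise

/-- The standard inner product of two vectors of `ℝ^d`. -/
def pairing {d : ℕ} (u a : Fin d → ℝ) : ℝ := ∑ i, u i * a i

lemma pairing_add {d : ℕ} (u v a : Fin d → ℝ) :
    pairing (u + v) a = pairing u a + pairing v a := by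
  simp [pairing, add_mul, Finset.sum_add_distrib]

/-- for `U = V + Γ` with `V ⊆ C` countable and `Γ` the points of `C` outside
a (possibly empty) truncation of `C`, one has `closure U + interior C ⊆ interior U`. -/
theorem closure_add_interior_subset_interior
    (d : ℕ) (C : Set (Fin d → ℝ))
    (hCclosed : IsClosed C)
    (hCsmul : ∀ c : ℝ, 0 ≤ c → ∀ u ∈ C, c • u ∈ C)
    (hCadd : ∀ u ∈ C, ∀ v ∈ C, u + v ∈ C)
    (hfull : Submodule.span ℝ C = ⊤)
    (a : Fin d → ℝ) (ha : ∀ u ∈ C, u ≠ 0 → 0 < pairing u a)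
    (α : ℝ) (hα : 0 ≤ α)
    (Γ : Set (Fin d → ℝ)) (hΓ : Γ = {u ∈ C | ¬ pairing u a < α})
    (V : Set (Fin d → ℝ)) (hVC : V ⊆ C) (hVcnt : V.Countable)
    (U : Set (Fin d → ℝ)) (hU : U = V + Γ) :
    closure U + interior C ⊆ interior U := by
  -- pairing with a is nonneg on C
  have hpair : ∀ u ∈ C, 0 ≤ pairing u a := by
    intro u hu
    by_cases h : u = 0
    · simp [h, pairing]
    · exact le_of_lt (ha u hu h)
  -- Γ + C ⊆ Γ
  have hΓC : ∀ γ ∈ Γ, ∀ c ∈ C, γ + c ∈ Γ := by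
    intro γ hγ c hc
    rw [hΓ] at hγ ⊢
    obtain ⟨hγC, hγα⟩ := hγ
    refine ⟨hCadd γ hγC c hc, ?_⟩
    rw [pairing_add]
    intro hlt
    exact hγα (by linarith [hpair c hc])
  -- U + C ⊆ U
  have hUC : ∀ u ∈ U, ∀ c ∈ C, u + c ∈ U := by
    intro u hu c hc
    rw [hU] at hu ⊢
    obtain ⟨v, hv, γ, hγ, rfl⟩ := hu
    exact ⟨v, hv, γ + c, hΓC γ hγ c hc, (add_assoc v γ c).symm⟩
  -- main topological argument
  intro z hz
  rw [Set.mem_add] at hz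
  obtain ⟨p, hp, q, hq, rfl⟩ := hz
  obtain ⟨ε, hε, hball⟩ := Metric.mem_nhds_iff.mp (mem_interior_iff_mem_nhds.mp hq)
  obtain ⟨u, hu, hdu⟩ := Metric.mem_closure_iff.mp hp ε hε
  rw [mem_interior_iff_mem_nhds, Metric.mem_nhds_iff]
  refine ⟨ε - dist p u, by linarith, ?_⟩
  intro w hw
  rw [Metric.mem_ball] at hw
  have hwu : w = u + (q + ((w - (p + q)) + (p - u))) := by abel
  rw [hwu]
  refine hUC u hu _ (hball ?_)
  rw [Metric.mem_ball]
  calc dist (q + ((w - (p + q)) + (p - u))) q = ‖(w - (p + q)) + (p - u)‖ := by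
        rw [dist_eq_norm]; congr 1; abel
    _ ≤ ‖w - (p + q)‖ + ‖p - u‖ := norm_add_le _ _
    _ = dist w (p + q) + dist p u := by rw [dist_eq_norm, dist_eq_norm]
    _ < ε := by linarith
end

section
/- Let C be a full-dimensional pointed closed convex cone in ℝ^d, let Γ be the set of points of C lying outside some (possibly empty) truncation of C, let V be a countable subset of C, and let U = V + Γ be the Minkowski sum. Then the topological boundary ∂U of U has Lebesgue measure zero. -/
open Filter MeasureTheory
open scoped Pointwise

/-- for `U = V + Γ` with `V ⊆ C` countable and `Γ` the points of `C` outside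
a (possibly empty) truncation of `C`, the boundary of `U` has Lebesgue measure zero. -/
theorem boundary_measure_zero
    (d : ℕ) (C : Set (Fin d → ℝ))
    (hCclosed : IsClosed C)
    (hCsmul : ∀ c : ℝ, 0 ≤ c → ∀ u ∈ C, c • u ∈ C)
    (hCadd : ∀ u ∈ C, ∀ v ∈ C, u + v ∈ C)
    (hfull : Submodule.span ℝ C = ⊤)
    (a : Fin d → ℝ) (ha : ∀ u ∈ C, u ≠ 0 → 0 < pairing u a)
    (α : ℝ) (hα : 0 ≤ α)
    (Γ : Set (Fin d → ℝ)) (hΓ : Γ = {u ∈ C | ¬ pairing u a < α})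
    (V : Set (Fin d → ℝ)) (hVC : V ⊆ C) (hVcnt : V.Countable)
    (U : Set (Fin d → ℝ)) (hU : U = V + Γ) :
    volume (frontier U) = 0 := by
  classical
  -- trivial case: C empty
  rcases C.eq_empty_or_nonempty with hCe | ⟨u₀, hu₀⟩
  · have hΓe : Γ = ∅ := by
      rw [hΓ, hCe]; ext x; simp
    rw [hU, hΓe, Set.add_empty]
    simp
  have h0C : (0 : Fin d → ℝ) ∈ C := by
    have := hCsmul 0 le_rfl u₀ hu₀
    simpa using this
  -- pairing is nonnegative on C
  have hpair0 : ∀ c ∈ C, 0 ≤ pairing c a := by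
    intro c hc
    rcases eq_or_ne c 0 with rfl | hne
    · simp [pairing]
    · exact (ha c hc hne).le
  have hpair_add : ∀ u v : Fin d → ℝ, pairing (u + v) a = pairing u a + pairing v a := by
    intro u v
    simp [pairing, add_mul, Finset.sum_add_distrib]
  -- U absorbs C
  have hUC : ∀ u ∈ U, ∀ c ∈ C, u + c ∈ U := by
    intro u hu c hc
    rw [hU] at hu ⊢
    obtain ⟨v, hv, g, hg, rfl⟩ := Set.mem_add.mp hu
    refine Set.mem_add.mpr ⟨v, hv, g + c, ?_, by abel⟩
    rw [hΓ] at hg ⊢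
    refine ⟨hCadd g hg.1 c hc, ?_⟩
    have h1 : ¬ pairing g a < α := hg.2
    have h2 : 0 ≤ pairing c a := hpair0 c hc
    rw [hpair_add]
    push_neg at h1 ⊢
    linarith
  -- C is convex
  have hconv : Convex ℝ C := by
    intro x hx y hy s t hs ht hst
    exact hCadd _ (hCsmul s hs x hx) _ (hCsmul t ht y hy)
  -- interior of C is nonempty
  have hW : (interior C).Nonempty := by
    rw [hconv.interior_nonempty_iff_affineSpan_eq_top]
    rw [← AffineSubspace.coe_eq_univ_iff]
    have : (affineSpan ℝ (insert 0 C) : Set (Fin d → ℝ)) = Submodule.span ℝ C :=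
      affineSpan_insert_zero _
    rw [Set.insert_eq_self.mpr h0C] at this
    rw [this, hfull]
    simp
  obtain ⟨w, hw⟩ := hW
  -- interior C is closed under positive scaling
  have hsc : ∀ t : ℝ, 0 < t → ∀ c ∈ interior C, t • c ∈ interior C := by
    intro t ht c hc
    have hopen : IsOpen (t • interior C) := isOpenMap_smul₀ ht.ne' _ isOpen_interior
    have hsub : t • interior C ⊆ C := by
      rintro _ ⟨x, hx, rfl⟩
      exact hCsmul t ht.le x (interior_subset hx)
    exact interior_maximal hsub hopen ⟨c, hc, rfl⟩
  -- key: closure U + interior C ⊆ interior U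
  have hkey : ∀ x ∈ closure U, ∀ c ∈ interior C, x + c ∈ interior U := by
    intro x hx c hc
    obtain ⟨ε, hε, hball⟩ := Metric.isOpen_iff.mp isOpen_interior c hc
    obtain ⟨u, hu, hdist⟩ := Metric.mem_closure_iff.mp hx ε hε
    have hc' : c + (x - u) ∈ interior C := by
      apply hball
      have : dist (c + (x - u)) c = dist x u := by
        rw [dist_eq_norm, dist_eq_norm]
        congr 1
        abel
      rw [Metric.mem_ball, this]
      exact hdist
    have hopen : IsOpen ((u + ·) '' interior C) :=
      (isOpenMap_add_left u) _ isOpen_interior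
    have hsub : (u + ·) '' interior C ⊆ U := by
      rintro _ ⟨y, hy, rfl⟩
      exact hUC u hu y (interior_subset hy)
    have hmem : x + c ∈ (u + ·) '' interior C := ⟨c + (x - u), hc', by abel⟩
    exact interior_maximal hsub hopen hmem
  -- translates of the frontier are pairwise disjoint
  set F := frontier U with hF
  have hFdisj : ∀ s t : ℝ, s < t → Disjoint ((s • w) +ᵥ F) ((t • w) +ᵥ F) := by
    intro s t hst
    rw [Set.disjoint_left]
    rintro x ⟨p, hp, rfl⟩ hx2
    obtain ⟨q, hq, hqe⟩ := hx2
    -- s • w + p = t • w + q, so p = q + (t - s) • w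
    have hpe : p = q + (t - s) • w := by
      have : s • w + p = t • w + q := hqe.symm
      have h2 : p = t • w + q - s • w := by
        rw [← this]; abel
      rw [h2, sub_smul]; abel
    have hqcl : q ∈ closure U := hq.1
    have hmem : q + (t - s) • w ∈ interior U :=
      hkey q hqcl _ (hsc (t - s) (by linarith) w hw)
    rw [← hpe] at hmem
    exact hp.2 hmem
  -- measurability
  have hFmeas : MeasurableSet F := isClosed_frontier.measurableSet
  -- bounded pieces of F have measure zero
  have hFn : ∀ n : ℕ, volume (F ∩ Metric.closedBall 0 n) = 0 := by
    intro n
    set G := F ∩ Metric.closedBall (0 : Fin d → ℝ) n with hG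
    have hGmeas : MeasurableSet G := hFmeas.inter measurableSet_closedBall
    by_contra hne
    -- translates of G by (1/(k+1)) • w, k : ℕ, are pairwise disjoint and
    -- contained in a fixed ball
    set f : ℕ → ℝ := fun k => 1 / (k + 1) with hf
    have hfpos : ∀ k : ℕ, 0 < f k := fun k => by positivity
    have hfanti : ∀ k l : ℕ, k < l → f l < f k := by
      intro k l hkl
      apply one_div_lt_one_div_of_lt (by positivity)
      exact_mod_cast by exact_mod_cast add_lt_add_left (Nat.cast_lt.mpr hkl) 1
    have hdisj : Pairwise (Function.onFun Disjoint fun k : ℕ => (f k • w) +ᵥ G) := by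
      intro k l hkl
      rcases lt_or_gt_of_ne hkl with h | h
      · refine Set.disjoint_of_subset ?_ ?_ (hFdisj (f l) (f k) (hfanti k l h)).symm
        · exact Set.vadd_set_mono Set.inter_subset_left
        · exact Set.vadd_set_mono Set.inter_subset_left
      · refine Set.disjoint_of_subset ?_ ?_ (hFdisj (f k) (f l) (hfanti l k h))
        · exact Set.vadd_set_mono Set.inter_subset_left
        · exact Set.vadd_set_mono Set.inter_subset_left
    have hsubset : (⋃ k : ℕ, (f k • w) +ᵥ G) ⊆ Metric.closedBall (0 : Fin d → ℝ) (n + ‖w‖) := by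
      rintro x hx
      obtain ⟨k, hk⟩ := Set.mem_iUnion.mp hx
      obtain ⟨g, hg, rfl⟩ := hk
      have h1 : ‖g‖ ≤ n := by
        have := hg.2
        rwa [Metric.mem_closedBall, dist_zero_right] at this
      have h2 : ‖f k • w‖ ≤ ‖w‖ := by
        rw [norm_smul, Real.norm_eq_abs]
        have : |f k| ≤ 1 := by
          rw [abs_of_pos (hfpos k)]
          rw [hf]
          apply div_le_one_of_le₀ _ (by positivity)
          simp
        nlinarith [norm_nonneg w]
      rw [Metric.mem_closedBall, dist_zero_right]
      calc ‖f k • w + g‖ ≤ ‖f k • w‖ + ‖g‖ := norm_add_le _ _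
        _ ≤ n + ‖w‖ := by linarith
    have hmeasv : ∀ k : ℕ, MeasurableSet ((f k • w) +ᵥ G) :=
      fun k => hGmeas.const_vadd _
    have hsum : volume (⋃ k : ℕ, (f k • w) +ᵥ G) = ∑' k : ℕ, volume ((f k • w) +ᵥ G) :=
      measure_iUnion hdisj hmeasv
    have hvadd : ∀ k : ℕ, volume ((f k • w) +ᵥ G) = volume G := fun k => measure_vadd _ _ _
    have htop : volume (⋃ k : ℕ, (f k • w) +ᵥ G) = ⊤ := by
      rw [hsum]
      simp_rw [hvadd]
      exact ENNReal.tsum_const_eq_top_of_ne_zero hne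
    have hfin : volume (⋃ k : ℕ, (f k • w) +ᵥ G) < ⊤ :=
      lt_of_le_of_lt (measure_mono hsubset) (MeasureTheory.measure_closedBall_lt_top)
    rw [htop] at hfin
    exact absurd hfin (lt_irrefl _)
  -- conclude
  have hcover : F = ⋃ n : ℕ, F ∩ Metric.closedBall 0 n := by
    ext x
    simp only [Set.mem_iUnion, Set.mem_inter_iff, Metric.mem_closedBall, dist_zero_right]
    constructor
    · intro hx
      obtain ⟨n, hn⟩ := exists_nat_ge ‖x‖
      exact ⟨n, hx, hn⟩
    · rintro ⟨n, hx, -⟩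
      exact hx
  refine le_antisymm ?_ zero_le
  calc volume F = volume (⋃ n : ℕ, F ∩ Metric.closedBall 0 n) := by rw [← hcover]
    _ ≤ ∑' n : ℕ, volume (F ∩ Metric.closedBall 0 n) := measure_iUnion_le _
    _ = 0 := by simp [hFn]
end

section
/- Let (R,m) be a Noetherian local ring of Krull dimension d ≥ 1, let p be a prime, and let I_• = {I_q} be a sequence of ideals of R indexed by the powers q = p^e of p such that m^{cq} ⊆ I_q for some fixed positive integer c and all q. Let x be a nonzerodivisor of R and let L_• = {L_q} be a sequence of ideals with I_q ⊆ L_q ⊆ (I_q : x) for every q. Then there exists a real number γ > 0 such that 0 ≤ ℓ_R(R/I_q) − ℓ_R(R/L_q) ≤ γ·q^{d−1} for every q. -/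
open Filter IsLocalRing

/-- The length of the `R`-module `M`: the supremum of lengths of chains of submodules,
truncated to a natural number (it is finite for the modules considered here). -/
noncomputable def lengthNat (R M : Type*) [Ring R] [AddCommGroup M] [Module R M] : ℕ :=
  (WithBot.unbotD 0 (Order.krullDim (Submodule R M))).toNat

namespace LDB

open Order

noncomputable def len (R M : Type*) [Ring R] [AddCommGroup M] [Module R M] : ℕ∞ :=
  WithBot.unbotD 0 (Order.krullDim (Submodule R M))

variable {R M N P : Type*} [Ring R] [AddCommGroup M] [Module R M]
  [AddCommGroup N] [Module R N] [AddCommGroup P] [Module R P]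

lemma unbot'_zero_eq {z : WithBot ℕ∞} (h : 0 ≤ z) : z = ((WithBot.unbotD 0 z : ℕ∞) : WithBot ℕ∞) := by
  cases z with
  | bot => simp at h
  | coe a => rfl

lemma krullDim_eq_len (R M : Type*) [Ring R] [AddCommGroup M] [Module R M] :
    Order.krullDim (Submodule R M) = ((len R M : ℕ∞) : WithBot ℕ∞) :=
  unbot'_zero_eq (krullDim_nonneg)

/-- length is monotone under injective linear maps -/
lemma len_le_of_injective (f : M →ₗ[R] N) (hf : Function.Injective f) :
    len R M ≤ len R N := by
  have : Order.krullDim (Submodule R M) ≤ Order.krullDim (Submodule R N) :=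
    krullDim_le_of_strictMono (Submodule.map f)
      (fun p q hpq => lt_of_le_of_ne (Submodule.map_mono hpq.le)
        (fun h => hpq.ne (Submodule.map_injective_of_injective hf h)))
  rwa [krullDim_eq_len R M, krullDim_eq_len R N, WithBot.coe_le_coe] at this

lemma len_le_of_surjective (f : M →ₗ[R] N) (hf : Function.Surjective f) :
    len R N ≤ len R M := by
  have : Order.krullDim (Submodule R N) ≤ Order.krullDim (Submodule R M) :=
    krullDim_le_of_strictMono (Submodule.comap f)
      (fun p q hpq => lt_of_le_of_ne (Submodule.comap_mono hpq.le)
        (fun h => hpq.ne (Submodule.comap_injective_of_surjective hf h)))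
  rwa [krullDim_eq_len R M, krullDim_eq_len R N, WithBot.coe_le_coe] at this

lemma len_eq_of_equiv (e : M ≃ₗ[R] N) : len R M = len R N :=
  le_antisymm (len_le_of_injective e.toLinearMap e.injective)
    (len_le_of_surjective e.toLinearMap e.surjective)

lemma len_subsingleton [Subsingleton M] : len R M = 0 := by
  have h1 : Order.krullDim (Submodule R M) ≤ 0 := krullDim_nonpos_of_subsingleton
  have h2 : (0:WithBot ℕ∞) ≤ Order.krullDim (Submodule R M) := krullDim_nonneg
  have : Order.krullDim (Submodule R M) = 0 := le_antisymm h1 h2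
  have := krullDim_eq_len R M ▸ this
  simpa [len] using this


lemma height_le_len {R M : Type*} [Ring R] [AddCommGroup M] [Module R M]
    (x : Submodule R M) : height x ≤ len R M := by
  have := height_le_krullDim x
  rw [krullDim_eq_len] at this
  exact_mod_cast this

/-- the key sub-additivity: `len M ≤ len N + len (M ⧸ N)`. -/
lemma len_le_add (N : Submodule R M) : len R M ≤ len R N + len R (M ⧸ N) := by
  by_cases hN : len R N = ⊤
  · simp [hN]
  by_cases hQ : len R (M ⧸ N) = ⊤
  · simp [hQ]
  -- key step on pairs
  have key : ∀ p q : Submodule R M, p < q →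
      height (Submodule.comap N.subtype p) + height (Submodule.map N.mkQ p) + 1 ≤
      height (Submodule.comap N.subtype q) + height (Submodule.map N.mkQ q) := by
    intro p q hpq
    have hc : Submodule.comap N.subtype p ≤ Submodule.comap N.subtype q :=
      Submodule.comap_mono hpq.le
    have hm : Submodule.map N.mkQ p ≤ Submodule.map N.mkQ q := Submodule.map_mono hpq.le
    have hne : Submodule.comap N.subtype p ≠ Submodule.comap N.subtype q ∨
        Submodule.map N.mkQ p ≠ Submodule.map N.mkQ q := by
      by_contra hcon
      push_neg at hcon
      obtain ⟨h1, h2⟩ := hcon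
      refine hpq.ne (le_antisymm hpq.le ?_)
      intro z hz
      have : N.mkQ z ∈ Submodule.map N.mkQ p := h2 ▸ ⟨z, hz, rfl⟩
      obtain ⟨y, hy, hyz⟩ := this
      have hzy : z - y ∈ N := by
        have h3 : y - z ∈ N := by
          rwa [Submodule.mkQ_apply, Submodule.mkQ_apply, Submodule.Quotient.eq] at hyz
        simpa using N.neg_mem h3
      have hzyq : (⟨z - y, hzy⟩ : N) ∈ Submodule.comap N.subtype q :=
        Submodule.sub_mem _ hz (hpq.le hy)
      have : (⟨z - y, hzy⟩ : N) ∈ Submodule.comap N.subtype p := h1 ▸ hzyq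
      have hzp : z - y ∈ p := this
      simpa using Submodule.add_mem _ hy hzp
    rcases hne with hne | hne
    · have hlt : Submodule.comap N.subtype p < Submodule.comap N.subtype q :=
        lt_of_le_of_ne hc hne
      have hfin : height (Submodule.comap N.subtype p) < ⊤ :=
        lt_of_le_of_lt (height_le_len _) (lt_top_iff_ne_top.mpr hN)
      have h1 := height_strictMono hlt hfin
      have h2 := height_mono hm
      calc height (Submodule.comap N.subtype p) + height (Submodule.map N.mkQ p) + 1
          = height (Submodule.comap N.subtype p) + 1 + height (Submodule.map N.mkQ p) := by ring
        _ ≤ height (Submodule.comap N.subtype q) + height (Submodule.map N.mkQ q) :=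
            add_le_add (Order.add_one_le_of_lt h1) h2
    · have hlt : Submodule.map N.mkQ p < Submodule.map N.mkQ q := lt_of_le_of_ne hm hne
      have hfin : height (Submodule.map N.mkQ p) < ⊤ :=
        lt_of_le_of_lt (height_le_len _) (lt_top_iff_ne_top.mpr hQ)
      have h1 := height_strictMono hlt hfin
      have h2 := height_mono hc
      calc height (Submodule.comap N.subtype p) + height (Submodule.map N.mkQ p) + 1
          ≤ height (Submodule.comap N.subtype q) + (height (Submodule.map N.mkQ p) + 1) := by
            rw [add_assoc]; exact add_le_add h2 le_rfl
        _ ≤ height (Submodule.comap N.subtype q) + height (Submodule.map N.mkQ q) :=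
            add_le_add le_rfl (Order.add_one_le_of_lt h1)
  have main : ∀ p : LTSeries (Submodule R M), (p.length : ℕ∞) ≤ len R N + len R (M ⧸ N) := by
    intro p
    have step : ∀ i : ℕ, ∀ hi : i ≤ p.length, (i : ℕ∞) ≤
        height (Submodule.comap N.subtype (p ⟨i, by omega⟩)) +
        height (Submodule.map N.mkQ (p ⟨i, by omega⟩)) := by
      intro i
      induction i with
      | zero => intro _; simp
      | succ j ih =>
        intro hi
        have hj : j ≤ p.length := by omega
        have hlt : p ⟨j, by omega⟩ < p ⟨j + 1, by omega⟩ := p.strictMono (by simp)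
        have := key _ _ hlt
        calc ((j + 1 : ℕ) : ℕ∞) = (j : ℕ∞) + 1 := by push_cast; ring
      _ ≤ height (Submodule.comap N.subtype (p ⟨j, by omega⟩)) +
            height (Submodule.map N.mkQ (p ⟨j, by omega⟩)) + 1 :=
            add_le_add (ih hj) le_rfl
      _ ≤ _ := this
    have := step p.length le_rfl
    refine le_trans this (add_le_add (height_le_len _) (height_le_len _))
  have : Order.krullDim (Submodule R M) ≤ ((len R N + len R (M ⧸ N) : ℕ∞) : WithBot ℕ∞) := by
    rw [krullDim_eq_iSup_length, WithBot.coe_le_coe]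
    exact iSup_le main
  rw [krullDim_eq_len] at this
  exact_mod_cast this



section CRing

variable {R : Type*} [CommRing R]


lemma len_quot_mono {I J : Ideal R} (h : I ≤ J) : len R (R ⧸ J) ≤ len R (R ⧸ I) :=
  len_le_of_surjective
    (Submodule.liftQ (I : Submodule R R) (Submodule.mkQ (J : Submodule R R)) (by simpa using h))
    (fun z => by
      obtain ⟨w, rfl⟩ := Submodule.mkQ_surjective _ z
      exact ⟨Submodule.Quotient.mk w, rfl⟩)

lemma len_quot_maximal (m : Ideal R) (hm : m.IsMaximal) : len R (R ⧸ m) ≤ 1 := by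
  haveI : IsSimpleModule R (R ⧸ m) :=
    isSimpleModule_iff_isCoatom.mpr (Ideal.isMaximal_def.mp hm)
  have hlt : ∀ p : LTSeries (Submodule R (R ⧸ m)), (p.length : ℕ∞) ≤ 1 := by
    intro p
    by_contra hcon
    have h2 : 2 ≤ p.length := by
      by_contra h
      exact hcon (by exact_mod_cast Nat.lt_succ_iff.mp (by omega))
    have h01 : p ⟨0, by omega⟩ < p ⟨1, by omega⟩ := p.strictMono (by simp [Fin.lt_def])
    have h12 : p ⟨1, by omega⟩ < p ⟨2, by omega⟩ := p.strictMono (by simp [Fin.lt_def])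
    rcases IsSimpleOrder.eq_bot_or_eq_top (p ⟨1, by omega⟩) with h | h
    · exact not_lt_bot (h ▸ h01)
    · exact not_top_lt (h ▸ h12)
  have : Order.krullDim (Submodule R (R ⧸ m)) ≤ ((1 : ℕ∞) : WithBot ℕ∞) := by
    rw [krullDim_eq_iSup_length, WithBot.coe_le_coe]
    exact iSup_le hlt
  rw [krullDim_eq_len] at this
  exact_mod_cast this

/-- If `M` is generated by `n` elements and every element is killed by `I`,
then `len M ≤ n • Λ` where `len (R ⧸ I) ≤ Λ`. -/
lemma len_le_nsmul_of_span (I : Ideal R) (Λ : ℕ∞) (hΛ : len R (R ⧸ I) ≤ Λ) :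
    ∀ (n : ℕ) (M : Type v) [AddCommGroup M] [Module R M] (f : Fin n → M),
      Submodule.span R (Set.range f) = ⊤ → (∀ r ∈ I, ∀ v : M, r • v = 0) →
      len R M ≤ n • Λ := by
  intro n
  induction n with
  | zero =>
    intro M _ _ f hf _
    have hbot : (⊥ : Submodule R M) = ⊤ := by
      rw [← hf, Set.range_eq_empty f, Submodule.span_empty]
    haveI : Subsingleton M := by
      constructor
      intro a b
      have ha : a ∈ (⊥ : Submodule R M) := hbot ▸ Submodule.mem_top
      have hb : b ∈ (⊥ : Submodule R M) := hbot ▸ Submodule.mem_top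
      simp only [Submodule.mem_bot] at ha hb
      rw [ha, hb]
    simp [len_subsingleton]
  | succ k ih =>
    intro M _ _ f hf hann
    set N : Submodule R M := Submodule.span R (Set.range (f ∘ Fin.castSucc)) with hN
    have hMN : len R M ≤ len R N + len R (M ⧸ N) := len_le_add N
    -- the quotient is cyclic, generated by the image of `f (Fin.last k)`
    set vlast : M ⧸ N := N.mkQ (f (Fin.last k)) with hv
    have hspan : Submodule.span R {vlast} = ⊤ := by
      rw [eq_top_iff]
      rintro z -
      obtain ⟨w, rfl⟩ := Submodule.mkQ_surjective N z
      have hw : w ∈ Submodule.span R (Set.range f) := hf ▸ Submodule.mem_top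
      induction hw using Submodule.span_induction with
      | mem y hy =>
        obtain ⟨i, rfl⟩ := hy
        rcases Fin.eq_castSucc_or_eq_last i with ⟨j, rfl⟩ | rfl
        · have : f (Fin.castSucc j) ∈ N := Submodule.subset_span ⟨j, rfl⟩
          rw [show N.mkQ (f (Fin.castSucc j)) = 0 by simpa using this]
          exact Submodule.zero_mem _
        · exact Submodule.subset_span rfl
      | zero => simp [Submodule.zero_mem]
      | add a b _ _ ha hb => rw [map_add]; exact Submodule.add_mem _ ha hb
      | smul r a _ ha => rw [map_smul]; exact Submodule.smul_mem _ r ha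
    have hquot : len R (M ⧸ N) ≤ Λ := by
      set φ : R →ₗ[R] M ⧸ N := LinearMap.toSpanSingleton R (M ⧸ N) vlast with hφ
      have hker : (I : Submodule R R) ≤ LinearMap.ker φ := by
        intro r hr
        have : r • vlast = 0 := by
          rw [hv, ← map_smul, hann r hr (f (Fin.last k)), map_zero]
        simpa [hφ, LinearMap.toSpanSingleton_apply] using this
      have hφsurj : Function.Surjective φ := by
        intro z
        have hz : z ∈ Submodule.span R {vlast} := hspan ▸ Submodule.mem_top
        obtain ⟨r, rfl⟩ := Submodule.mem_span_singleton.mp hz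
        exact ⟨r, by simp [hφ, LinearMap.toSpanSingleton_apply]⟩
      refine le_trans (len_le_of_surjective (Submodule.liftQ _ φ hker) ?_) hΛ
      intro z
      obtain ⟨r, rfl⟩ := hφsurj z
      exact ⟨Submodule.Quotient.mk r, rfl⟩
    have hNle : len R N ≤ k • Λ := by
      set f' : Fin k → N := fun i => ⟨f (Fin.castSucc i), Submodule.subset_span ⟨i, rfl⟩⟩ with hf'
      refine ih N f' ?_ ?_
      · apply Submodule.map_injective_of_injective N.injective_subtype
        rw [Submodule.map_span, Submodule.map_top, Submodule.range_subtype]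
        congr 1
        ext z
        constructor
        · rintro ⟨y, ⟨i, rfl⟩, rfl⟩
          exact ⟨i, rfl⟩
        · rintro ⟨i, rfl⟩
          exact ⟨f' i, ⟨i, rfl⟩, rfl⟩
      · intro r hr v
        have : ((r • v : N) : M) = 0 := by
          rw [Submodule.coe_smul]
          exact hann r hr _
        exact Submodule.coe_eq_zero.mp this
    calc len R M ≤ len R N + len R (M ⧸ N) := hMN
      _ ≤ k • Λ + Λ := add_le_add hNle hquot
      _ = (k + 1) • Λ := (succ_nsmul Λ k).symm


lemma len_quot_top : len R (R ⧸ (⊤ : Ideal R)) = 0 := by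
  haveI : Subsingleton (R ⧸ (⊤ : Ideal R)) := by
    constructor
    intro a b
    obtain ⟨u, rfl⟩ := Submodule.mkQ_surjective ((⊤ : Ideal R) : Submodule R R) a
    obtain ⟨w, rfl⟩ := Submodule.mkQ_surjective ((⊤ : Ideal R) : Submodule R R) b
    rw [Submodule.mkQ_apply, Submodule.mkQ_apply, Submodule.Quotient.eq]
    exact Submodule.mem_top
  exact len_subsingleton

/-- In a Noetherian ring, `R ⧸ m^k` has finite length. -/
lemma exists_len_pow_le [IsNoetherianRing R] (m : Ideal R) (hm : m.IsMaximal) (k : ℕ) :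
    ∃ Λ : ℕ, len R (R ⧸ (m ^ k : Ideal R)) ≤ (Λ : ℕ∞) := by
  induction k with
  | zero =>
    refine ⟨0, ?_⟩
    have htop : (⊤ : Ideal R) ≤ m ^ 0 := by rw [pow_zero, Ideal.one_eq_top]
    simpa using le_trans (len_quot_mono htop) len_quot_top.le
  | succ k ih =>
    obtain ⟨Λk, hΛk⟩ := ih
    set S : Submodule R R := (m ^ (k+1) : Ideal R)
    set T : Submodule R R := (m ^ k : Ideal R)
    have hST : S ≤ T := Ideal.pow_le_pow_right (by omega)
    set N : Submodule R (R ⧸ (m ^ (k+1) : Ideal R)) := T.map S.mkQ with hNdef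
    have e : ((R ⧸ S) ⧸ N) ≃ₗ[R] (R ⧸ (m ^ k : Ideal R)) :=
      Submodule.quotientQuotientEquivQuotient S T hST
    -- N is finitely generated, killed by m
    haveI : IsNoetherian R (R ⧸ S) := isNoetherian_quotient _
    have hfg : (⊤ : Submodule R N).FG := IsNoetherian.noetherian ⊤
    obtain ⟨nn, s, hs⟩ := Submodule.fg_iff_exists_fin_generating_family.mp hfg
    have hNlen : len R N ≤ (nn : ℕ∞) := by
      have h1 : len R N ≤ nn • (1 : ℕ∞) := by
        refine len_le_nsmul_of_span m 1 (len_quot_maximal m hm) nn N s hs ?_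
        intro r hr v
        have hvN : (v : R ⧸ S) ∈ N := v.2
        obtain ⟨w, hw, hweq⟩ := hvN
        have hmem : r * w ∈ S := by
          have : r * w ∈ m * m ^ k := Ideal.mul_mem_mul hr hw
          rwa [← pow_succ'] at this
        have hz : r • S.mkQ w = 0 := by
          rw [← map_smul, smul_eq_mul, Submodule.mkQ_apply, Submodule.Quotient.mk_eq_zero]
          exact hmem
        apply Subtype.ext
        have hcoe : ((r • v : N) : R ⧸ S) = r • (v : R ⧸ S) := rfl
        rw [hcoe, ← hweq]
        simpa using hz
      simpa [smul_eq_mul, mul_one] using h1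
    refine ⟨nn + Λk, ?_⟩
    calc len R (R ⧸ (m ^ (k+1) : Ideal R)) ≤ len R N + len R ((R ⧸ S) ⧸ N) := len_le_add N
      _ = len R N + len R (R ⧸ (m ^ k : Ideal R)) := by rw [len_eq_of_equiv e]
      _ ≤ (nn : ℕ∞) + (Λk : ℕ∞) := add_le_add hNlen hΛk
      _ = ((nn + Λk : ℕ) : ℕ∞) := by push_cast; ring


/-- The filtration bound: if `m^k ≤ span ys ⊔ W` then
`len (R ⧸ (span ys ^ n ⊔ W)) ≤ (n+1)^|ys| * Λ` where `Λ` bounds `len (R ⧸ m^k)`. -/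
lemma fil (m : Ideal R) (k : ℕ) (Λ : ℕ∞) (hΛ : len R (R ⧸ (m ^ k : Ideal R)) ≤ Λ) :
    ∀ (ys : List R) (W : Ideal R), m ^ k ≤ Ideal.span {r | r ∈ ys} ⊔ W →
    ∀ n : ℕ, len R (R ⧸ ((Ideal.span {r | r ∈ ys}) ^ n ⊔ W : Ideal R)) ≤
      (((n+1) ^ ys.length : ℕ) : ℕ∞) * Λ := by
  intro ys
  induction ys with
  | nil =>
    intro W hW n
    have hsp : Ideal.span {r : R | r ∈ ([] : List R)} = ⊥ := by
      convert Ideal.span_empty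
      simp
    rw [hsp] at hW ⊢
    simp only [List.length_nil, pow_zero, Nat.cast_one, one_mul]
    cases n with
    | zero =>
      have htop : (⊤ : Ideal R) ≤ (⊥ : Ideal R) ^ 0 ⊔ W := by
        rw [pow_zero, Ideal.one_eq_top]; exact le_sup_left
      refine le_trans (len_quot_mono htop) (le_trans len_quot_top.le zero_le)
    | succ n =>
      have hbW : (⊥ : Ideal R) ^ (n+1) ⊔ W = W := by
        rw [← Ideal.zero_eq_bot, zero_pow (Nat.succ_ne_zero n), Ideal.zero_eq_bot, bot_sup_eq]
      rw [hbW]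
      refine le_trans (len_quot_mono ?_) hΛ
      simpa using hW
  | cons y ys ih =>
    intro W hW n
    have hset : {r : R | r ∈ y :: ys} = insert y {r : R | r ∈ ys} := by
      ext r; simp
    set SP : Ideal R := Ideal.span {r | r ∈ ys} with hSP
    have hPspan : Ideal.span {r : R | r ∈ y :: ys} = Ideal.span {y} ⊔ SP := by
      rw [hset, hSP, Ideal.span_insert]
    set P : Ideal R := Ideal.span {y} ⊔ SP with hP
    rw [hPspan] at hW ⊢
    have hyP : y ∈ P := Submodule.mem_sup_left (Ideal.mem_span_singleton_self y)
    set D : ℕ → Ideal R := fun j => Ideal.span {y ^ j} ⊔ (P ^ n ⊔ W) with hD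
    have hDmono : ∀ j, D (j+1) ≤ D j := by
      intro j
      refine sup_le ?_ le_sup_right
      refine le_trans ?_ (le_sup_left : Ideal.span {y ^ j} ≤ _)
      rw [Ideal.span_singleton_le_span_singleton]
      exact ⟨y, pow_succ y j⟩
    -- main inner induction
    have key : ∀ j, j ≤ n → len R (R ⧸ D j) ≤ ((j * (n+1) ^ ys.length : ℕ) : ℕ∞) * Λ := by
      intro j
      induction j with
      | zero =>
        intro _
        have htop : (⊤ : Ideal R) ≤ D 0 := by
          refine le_trans ?_ (le_sup_left : Ideal.span {y ^ 0} ≤ D 0)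
          rw [pow_zero, Ideal.span_singleton_one]
        refine le_trans (len_quot_mono htop) (le_trans len_quot_top.le zero_le)
      | succ j ihj =>
        intro hjn
        have hjn' : j ≤ n := by omega
        set N : Submodule R (R ⧸ D (j+1)) := Submodule.map (D (j+1) : Submodule R R).mkQ
          (D j : Submodule R R) with hN
        have e : ((R ⧸ D (j+1)) ⧸ N) ≃ₗ[R] (R ⧸ D j) :=
          Submodule.quotientQuotientEquivQuotient _ _ (hDmono j)
        set v : R ⧸ D (j+1) := (D (j+1) : Submodule R R).mkQ (y ^ j) with hv
        set A : Ideal R := SP ^ (n - j) ⊔ (W ⊔ Ideal.span {y}) with hA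
        have goal1 : ∀ s ∈ (SP ^ (n - j) : Ideal R), s * y ^ j ∈ D (j+1) := by
          intro s hs
          have h1 : s * y ^ j ∈ (SP ^ (n-j)) * (P ^ j) :=
            Ideal.mul_mem_mul hs (Ideal.pow_mem_pow hyP j)
          have h2 : (SP ^ (n-j)) * (P ^ j) ≤ P ^ n := by
            calc (SP ^ (n-j)) * (P ^ j) ≤ (P ^ (n-j)) * (P ^ j) :=
                  Ideal.mul_mono (Ideal.pow_right_mono le_sup_right _) le_rfl
              _ = P ^ ((n-j) + j) := (pow_add P (n-j) j).symm
              _ = P ^ n := by congr 1; omega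
          exact Submodule.mem_sup_right (Submodule.mem_sup_left (h2 h1))
        have goal2 : ∀ s ∈ W, s * y ^ j ∈ D (j+1) := fun s hs =>
          Submodule.mem_sup_right (Submodule.mem_sup_right (Ideal.mul_mem_right _ _ hs))
        have goal3 : ∀ s ∈ Ideal.span {y}, s * y ^ j ∈ D (j+1) := by
          intro s hs
          obtain ⟨t, rfl⟩ := Ideal.mem_span_singleton.mp hs
          refine Submodule.mem_sup_left (Ideal.mem_span_singleton.mpr ⟨t, ?_⟩)
          rw [pow_succ]
          ring
        have hann : ∀ r ∈ A, r • v = 0 := by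
          intro r hr
          obtain ⟨a, ha, b, hb, rfl⟩ := Submodule.mem_sup.mp hr
          obtain ⟨w, hw, u, hu, rfl⟩ := Submodule.mem_sup.mp hb
          have hz : (a + (w + u)) * y ^ j ∈ D (j+1) := by
            have := Submodule.add_mem (D (j+1) : Submodule R R) (goal1 a ha)
              (Submodule.add_mem _ (goal2 w hw) (goal3 u hu))
            simpa [add_mul] using this
          have hrv : (a + (w + u)) • v = (D (j+1) : Submodule R R).mkQ ((a + (w + u)) * y ^ j) := by
            rw [hv, ← map_smul, smul_eq_mul]
          rw [hrv, Submodule.mkQ_apply, Submodule.Quotient.mk_eq_zero]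
          exact hz
        have hvN : v ∈ N :=
          ⟨y ^ j, Submodule.mem_sup_left (Ideal.mem_span_singleton_self _), rfl⟩
        have hNspan : ∀ z : R ⧸ D (j+1), z ∈ N → z ∈ Submodule.span R {v} := by
          intro z hz
          obtain ⟨w, hw, rfl⟩ := hz
          obtain ⟨a, ha, u, hu, rfl⟩ := Submodule.mem_sup.mp hw
          obtain ⟨t, rfl⟩ := Ideal.mem_span_singleton.mp ha
          have hmku : (D (j+1) : Submodule R R).mkQ u = 0 := by
            rw [Submodule.mkQ_apply, Submodule.Quotient.mk_eq_zero]
            exact Submodule.mem_sup_right hu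
          have hmka : (D (j+1) : Submodule R R).mkQ (y ^ j * t) = t • v := by
            rw [hv, ← map_smul, smul_eq_mul, mul_comm]
          rw [map_add, hmku, hmka, add_zero]
          exact Submodule.smul_mem _ t (Submodule.mem_span_singleton_self v)
        have hNlen : len R N ≤ (((n+1) ^ ys.length : ℕ) : ℕ∞) * Λ := by
          set φ : R →ₗ[R] N := LinearMap.codRestrict N
            (LinearMap.toSpanSingleton R _ v) (fun r => Submodule.smul_mem N r hvN) with hφ
          have hkerφ : (A : Submodule R R) ≤ LinearMap.ker φ := by
            intro r hr
            apply LinearMap.mem_ker.mpr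
            apply Subtype.ext
            exact hann r hr
          have hsurj : Function.Surjective (Submodule.liftQ (A : Submodule R R) φ hkerφ) := by
            intro z
            have hz : (z : R ⧸ D (j+1)) ∈ Submodule.span R {v} := hNspan _ z.2
            obtain ⟨r, hr⟩ := Submodule.mem_span_singleton.mp hz
            exact ⟨Submodule.Quotient.mk r, Subtype.ext hr⟩
          refine le_trans (len_le_of_surjective _ hsurj) ?_
          have hWy : m ^ k ≤ Ideal.span {r : R | r ∈ ys} ⊔ (W ⊔ Ideal.span {y}) := by
            refine le_trans hW (sup_le ?_ ?_)
            · rw [hP]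
              refine sup_le ?_ ?_
              · exact le_trans le_sup_right le_sup_right
              · exact le_sup_left
            · exact le_trans le_sup_left le_sup_right
          have hih := ih (W ⊔ Ideal.span {y}) hWy (n - j)
          rw [hA]
          refine le_trans hih ?_
          have hle : ((n - j + 1) ^ ys.length : ℕ) ≤ ((n+1) ^ ys.length : ℕ) :=
            Nat.pow_le_pow_left (by omega) _
          exact mul_le_mul' (by exact_mod_cast hle) le_rfl
        calc len R (R ⧸ D (j+1)) ≤ len R N + len R ((R ⧸ D (j+1)) ⧸ N) := len_le_add N
          _ = len R N + len R (R ⧸ D j) := by rw [len_eq_of_equiv e]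
          _ ≤ (((n+1) ^ ys.length : ℕ) : ℕ∞) * Λ + ((j * (n+1) ^ ys.length : ℕ) : ℕ∞) * Λ :=
              add_le_add hNlen (ihj hjn')
          _ = (((j+1) * (n+1) ^ ys.length : ℕ) : ℕ∞) * Λ := by push_cast; ring
    -- conclude: D n = P^n ⊔ W, and D n ≤ P^n ⊔ W suffices
    have hDn : D n ≤ P ^ n ⊔ W := by
      refine sup_le ?_ le_rfl
      refine le_trans ?_ (le_sup_left : P ^ n ≤ _)
      rw [Ideal.span_le]
      intro z hz
      rw [Set.mem_singleton_iff] at hz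
      subst hz
      exact Ideal.pow_mem_pow hyP n
    refine le_trans (len_quot_mono hDn) (le_trans (key n le_rfl) ?_)
    have hle : (n * (n+1) ^ ys.length : ℕ) ≤ ((n+1) ^ (y :: ys).length : ℕ) := by
      rw [List.length_cons, pow_succ]
      calc (n * (n+1) ^ ys.length : ℕ) = ((n+1) ^ ys.length) * n := by ring
        _ ≤ ((n+1) ^ ys.length) * (n+1) := Nat.mul_le_mul_left _ (by omega)
    exact mul_le_mul' (by exact_mod_cast hle) le_rfl


end CRing

variable {R : Type*} [CommRing R]

/-- A minimal prime consists of zerodivisors. -/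
lemma not_nonZeroDivisor_of_mem_minimalPrimes {p : Ideal R} (hp : p ∈ minimalPrimes R)
    {a : R} (ha : a ∈ p) : a ∉ nonZeroDivisors R := by
  haveI hprime : p.IsPrime := hp.1.1
  set A := Localization.AtPrime p with hAdef
  -- every prime of A is the maximal ideal
  have huniq : ∀ Q : Ideal A, Q.IsPrime → Q = maximalIdeal A := by
    intro Q hQ
    set eiso := IsLocalization.AtPrime.orderIsoOfPrime A p with heiso
    have key : ∀ (Q' : Ideal A) (hQ' : Q'.IsPrime), (eiso ⟨Q', hQ'⟩ : Ideal R) = p := by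
      intro Q' hQ'
      have h1 := (eiso ⟨Q', hQ'⟩).2
      exact le_antisymm h1.2 (hp.2 ⟨h1.1, bot_le⟩ h1.2)
    have : eiso ⟨Q, hQ⟩ = eiso ⟨maximalIdeal A, inferInstance⟩ :=
      Subtype.ext (by rw [key Q hQ, key (maximalIdeal A) inferInstance])
    exact congrArg Subtype.val (eiso.injective this)
  -- the maximal ideal of A is contained in the nilradical
  have hnil : maximalIdeal A ≤ nilradical A := by
    rw [nilradical_eq_sInf]
    exact le_sInf fun Q hQ => (huniq Q hQ).ge
  have hmem : algebraMap R A a ∈ maximalIdeal A :=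
    (IsLocalization.AtPrime.to_map_mem_maximal_iff A p a).mpr ha
  obtain ⟨n, hn⟩ := mem_nilradical.mp (hnil hmem)
  rw [← map_pow] at hn
  obtain ⟨s, hs⟩ := (IsLocalization.map_eq_zero_iff p.primeCompl A (a ^ n)).mp hn
  -- take a minimal such n
  intro hnzd
  have hex : ∃ n : ℕ, ∃ s : p.primeCompl, (s : R) * a ^ n = 0 := ⟨n, s, hs⟩
  classical
  obtain ⟨s0, hs0⟩ := Nat.find_spec hex
  have hn0pos : 0 < Nat.find hex := by
    rcases Nat.eq_zero_or_pos (Nat.find hex) with h | h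
    · exfalso
      rw [h, pow_zero, mul_one] at hs0
      exact s0.2 (hs0 ▸ p.zero_mem)
    · exact h
  have hsplit : ((s0 : R) * a ^ (Nat.find hex - 1)) * a = 0 := by
    rw [mul_assoc, ← pow_succ]
    have h2 : Nat.find hex - 1 + 1 = Nat.find hex := by omega
    rw [h2]
    exact hs0
  have hne : (s0 : R) * a ^ (Nat.find hex - 1) ≠ 0 := fun hzero =>
    Nat.find_min hex (by omega) ⟨s0, hzero⟩
  exact hne (hnzd.2 _ hsplit)


universe u

lemma krullDim_le_nat {α : Type*} [Preorder α] (n : ℕ)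
    (h : ∀ l : LTSeries α, l.length ≤ n) : Order.krullDim α ≤ (n : WithBot ℕ∞) := by
  cases isEmpty_or_nonempty α with
  | inl he => rw [krullDim_eq_bot]; exact bot_le
  | inr hne =>
    rw [krullDim_eq_iSup_length]
    have : (⨆ l : LTSeries α, (l.length : ℕ∞)) ≤ (n : ℕ∞) :=
      iSup_le fun l => by exact_mod_cast h l
    exact_mod_cast this

/-- Lifting a chain of primes from `S ⧸ (y)` and prepending a minimal prime. -/
lemma ringKrullDim_quot_le {S : Type u} [CommRing S] (y : S)
    (hy : ∀ p ∈ minimalPrimes S, y ∉ p) (n : ℕ)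
    (hdim : ringKrullDim S ≤ ((n + 1 : ℕ) : WithBot ℕ∞)) :
    ringKrullDim (S ⧸ Ideal.span {y}) ≤ (n : WithBot ℕ∞) := by
  apply krullDim_le_nat
  intro l
  set mk := Ideal.Quotient.mk (Ideal.span {y}) with hmk
  have hmksurj : Function.Surjective mk := Ideal.Quotient.mk_surjective
  set f : PrimeSpectrum (S ⧸ Ideal.span {y}) → PrimeSpectrum S :=
    fun q => ⟨Ideal.comap mk q.asIdeal, Ideal.IsPrime.comap _⟩ with hf
  have hfmono : StrictMono f := by
    intro u w huw
    refine lt_of_le_of_ne (Ideal.comap_mono huw.le) ?_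
    intro hcon
    have : u.asIdeal = w.asIdeal :=
      Ideal.comap_injective_of_surjective mk hmksurj (congrArg PrimeSpectrum.asIdeal hcon)
    exact huw.ne (PrimeSpectrum.ext this)
  set l' : LTSeries (PrimeSpectrum S) := l.map f hfmono with hl'
  have hyhead : y ∈ (l'.head).asIdeal := by
    have : mk y = 0 := Ideal.Quotient.eq_zero_iff_mem.mpr (Ideal.mem_span_singleton_self y)
    show y ∈ Ideal.comap mk (l.head).asIdeal
    rw [Ideal.mem_comap, this]
    exact Ideal.zero_mem _
  obtain ⟨p', hp', hp'le⟩ := Ideal.exists_minimalPrimes_le (I := (⊥ : Ideal S))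
    (J := (l'.head).asIdeal) bot_le
  haveI : p'.IsPrime := hp'.1.1
  have hlt : (⟨p', inferInstance⟩ : PrimeSpectrum S) < l'.head := by
    refine lt_of_le_of_ne hp'le ?_
    intro hcon
    have hpeq : p' = (l'.head).asIdeal := congrArg PrimeSpectrum.asIdeal hcon
    exact hy p' hp' (hpeq ▸ hyhead)
  set l'' : LTSeries (PrimeSpectrum S) := l'.cons _ hlt with hl''
  have hlen : l''.length = l.length + 1 := by
    simp [hl'', hl']
  have hle := Order.LTSeries.length_le_krullDim l''
  rw [hlen] at hle
  have : ((l.length + 1 : ℕ) : WithBot ℕ∞) ≤ ((n + 1 : ℕ) : WithBot ℕ∞) := by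
    refine le_trans ?_ hdim
    exact_mod_cast hle
  have : (l.length + 1 : ℕ) ≤ (n + 1 : ℕ) := by exact_mod_cast this
  omega

/-- Pull back a power-of-maximal-ideal containment along `S → S ⧸ (y)`. -/
lemma pull {S : Type u} [CommRing S] [IsLocalRing S] (y : S) (hy : y ∈ maximalIdeal S)
    [IsLocalRing (S ⧸ Ideal.span {y})]
    (s k : ℕ) (ys' : List (S ⧸ Ideal.span {y})) (hlen : ys'.length = s)
    (hmem : ∀ z ∈ ys', z ∈ maximalIdeal (S ⧸ Ideal.span {y}))
    (hpow : maximalIdeal (S ⧸ Ideal.span {y}) ^ k ≤ Ideal.span {r | r ∈ ys'}) :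
    ∃ ys : List S, ys.length = s ∧ (∀ z ∈ ys, z ∈ maximalIdeal S) ∧
      maximalIdeal S ^ k ≤ Ideal.span {r | r ∈ ys} ⊔ Ideal.span {y} := by
  set mk := Ideal.Quotient.mk (Ideal.span {y}) with hmkdef
  have hmksurj : Function.Surjective mk := Ideal.Quotient.mk_surjective
  classical
  set g : (S ⧸ Ideal.span {y}) → S := Function.surjInv hmksurj with hg
  have hgm : ∀ z, mk (g z) = z := fun z => Function.surjInv_eq hmksurj z
  refine ⟨ys'.map g, by simp [hlen], ?_, ?_⟩
  · intro z hz
    obtain ⟨w, hw, rfl⟩ := List.mem_map.mp hz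
    rw [IsLocalRing.mem_maximalIdeal] at *
    intro hu
    exact (hmem w hw) (by rw [← hgm w]; exact hu.map mk)
  · -- main containment
    have hmaple : Ideal.map mk (maximalIdeal S) ≤ maximalIdeal (S ⧸ Ideal.span {y}) := by
      rw [Ideal.map_le_iff_le_comap]
      intro a ha
      rw [Ideal.mem_comap, IsLocalRing.mem_maximalIdeal]
      intro hu
      obtain ⟨b, hb⟩ := isUnit_iff_exists_inv.mp hu
      obtain ⟨b', rfl⟩ := hmksurj b
      have : a * b' - 1 ∈ Ideal.span {y} := by
        rw [← Ideal.Quotient.eq]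
        simpa using hb
      have h1 : a * b' - 1 ∈ maximalIdeal S :=
        (Ideal.span_le.mpr (by simpa using hy)) this
      have h2 : a * b' ∈ maximalIdeal S := Ideal.mul_mem_right _ _ ha
      have h3 : (1 : S) ∈ maximalIdeal S := by
        simpa using Submodule.sub_mem _ h2 h1
      exact (IsLocalRing.maximalIdeal.isMaximal S).ne_top (Ideal.eq_top_iff_one _ |>.mpr h3)
    have hsetim : {r | r ∈ ys'} = mk '' {r : S | r ∈ ys'.map g} := by
      ext w
      constructor
      · intro hw
        exact ⟨g w, List.mem_map.mpr ⟨w, hw, rfl⟩, hgm w⟩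
      · rintro ⟨u, hu, rfl⟩
        obtain ⟨w', hw', rfl⟩ := List.mem_map.mp hu
        rw [hgm w']
        exact hw'
    intro r hr
    have h1 : mk r ∈ (maximalIdeal (S ⧸ Ideal.span {y})) ^ k := by
      have : mk r ∈ Ideal.map mk (maximalIdeal S ^ k) := Ideal.mem_map_of_mem mk hr
      rw [Ideal.map_pow] at this
      exact Ideal.pow_right_mono hmaple k this
    have h2 : mk r ∈ Ideal.map mk (Ideal.span {r : S | r ∈ ys'.map g}) := by
      rw [Ideal.map_span, ← hsetim]
      exact hpow h1
    have h3 : r ∈ Ideal.comap mk (Ideal.map mk (Ideal.span {r : S | r ∈ ys'.map g})) :=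
      Ideal.mem_comap.mpr h2
    rwa [Ideal.comap_map_of_surjective mk hmksurj, ← RingHom.ker_eq_comap_bot,
      Ideal.mk_ker] at h3

/-- Existence of a system of parameters. -/
theorem sop : ∀ (s : ℕ) (S : Type u) [CommRing S] [IsNoetherianRing S]
    [IsLocalRing S], ringKrullDim S ≤ (s : WithBot ℕ∞) →
    ∃ (ys : List S) (k : ℕ), ys.length = s ∧ (∀ y ∈ ys, y ∈ maximalIdeal S) ∧
      maximalIdeal S ^ k ≤ Ideal.span {r | r ∈ ys} := by
  have unique_case : ∀ (s : ℕ) (S : Type u) [CommRing S] [IsNoetherianRing S]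
      [IsLocalRing S], (∀ P : Ideal S, P.IsPrime → P = maximalIdeal S) →
      ∃ (ys : List S) (k : ℕ), ys.length = s ∧ (∀ y ∈ ys, y ∈ maximalIdeal S) ∧
        maximalIdeal S ^ k ≤ Ideal.span {r | r ∈ ys} := by
    intro s S _ _ _ hall
    have hnilmax : maximalIdeal S ≤ nilradical S := by
      rw [nilradical_eq_sInf]
      exact le_sInf fun Q hQ => (hall Q hQ).ge
    obtain ⟨k, hk⟩ := IsNoetherianRing.isNilpotent_nilradical S
    refine ⟨List.replicate s 0, k, by simp, ?_, ?_⟩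
    · intro z hz
      rw [List.eq_of_mem_replicate hz]
      exact Submodule.zero_mem _
    · have h1 : maximalIdeal S ^ k ≤ nilradical S ^ k := Ideal.pow_right_mono hnilmax k
      rw [hk] at h1
      exact le_trans h1 bot_le
  intro s
  induction s with
  | zero =>
    intro S _ _ _ hdim
    refine unique_case 0 S ?_
    intro P hP
    by_contra hne
    have hlt : (⟨P, hP⟩ : PrimeSpectrum S) < ⟨maximalIdeal S, inferInstance⟩ :=
      lt_of_le_of_ne (IsLocalRing.le_maximalIdeal hP.ne_top) (fun h => hne (by
        simpa using congrArg PrimeSpectrum.asIdeal h))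
    set l : LTSeries (PrimeSpectrum S) :=
      (RelSeries.singleton _ (⟨maximalIdeal S, inferInstance⟩ : PrimeSpectrum S)).cons _ hlt
    have hle := Order.LTSeries.length_le_krullDim l
    have hlen : l.length = 1 := by rfl
    rw [hlen] at hle
    have : ((1 : ℕ) : WithBot ℕ∞) ≤ ((0 : ℕ) : WithBot ℕ∞) := le_trans (by exact_mod_cast hle)
      (by exact_mod_cast hdim)
    have : (1 : ℕ) ≤ 0 := by exact_mod_cast this
    omega
  | succ s ih =>
    intro S _ _ _ hdim
    by_cases hm : maximalIdeal S ∈ minimalPrimes S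
    · refine unique_case (s+1) S ?_
      intro P hP
      have hPle : P ≤ maximalIdeal S := IsLocalRing.le_maximalIdeal hP.ne_top
      exact le_antisymm hPle (hm.2 ⟨hP, bot_le⟩ hPle)
    · -- choose y ∈ m avoiding all minimal primes
      have hfin : (minimalPrimes S).Finite := minimalPrimes.finite_of_isNoetherianRing S
      have hnotsub : ¬ ((maximalIdeal S : Set S) ⊆ ⋃ p ∈ (↑hfin.toFinset : Set (Ideal S)), ↑p) := by
        rw [Ideal.subset_union_prime ⊤ ⊤ (fun i hi _ _ => by
          rw [Set.Finite.mem_toFinset] at hi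
          exact hi.1.1 : ∀ i ∈ hfin.toFinset, i ≠ ⊤ → i ≠ ⊤ → i.IsPrime)]
        rintro ⟨p, hp, hple⟩
        rw [Set.Finite.mem_toFinset] at hp
        have : p = maximalIdeal S :=
          le_antisymm (IsLocalRing.le_maximalIdeal hp.1.1.ne_top) hple
        exact hm (this ▸ hp)
      obtain ⟨y, hym, hyn⟩ := Set.not_subset.mp hnotsub
      have hyavoid : ∀ p ∈ minimalPrimes S, y ∉ p := by
        intro p hp hyp
        refine hyn (Set.mem_biUnion ?_ hyp)
        rw [Set.Finite.coe_toFinset]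
        exact hp
      -- the quotient ring
      have hspan_ne_top : Ideal.span {y} ≠ ⊤ := by
        intro h
        have : Ideal.span {y} ≤ maximalIdeal S := Ideal.span_le.mpr (by simpa using hym)
        exact (IsLocalRing.maximalIdeal.isMaximal S).ne_top (top_le_iff.mp (h ▸ this))
      haveI : Nontrivial (S ⧸ Ideal.span {y}) :=
        Ideal.Quotient.nontrivial_iff.mpr hspan_ne_top
      haveI : IsLocalRing (S ⧸ Ideal.span {y}) :=
        IsLocalRing.of_surjective' (Ideal.Quotient.mk _) Ideal.Quotient.mk_surjective
      have hdim' : ringKrullDim (S ⧸ Ideal.span {y}) ≤ (s : WithBot ℕ∞) :=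
        ringKrullDim_quot_le y hyavoid s hdim
      obtain ⟨ys', k', hlen', hmem', hpow'⟩ := ih (S ⧸ Ideal.span {y}) hdim'
      obtain ⟨ys, hlen, hmem, hpow⟩ := pull y hym s k' ys' hlen' hmem' hpow'
      refine ⟨y :: ys, k', by simp [hlen], ?_, ?_⟩
      · intro z hz
        rcases List.mem_cons.mp hz with rfl | hz'
        · exact hym
        · exact hmem z hz'
      · refine le_trans hpow ?_
        have : {r : S | r ∈ y :: ys} = insert y {r : S | r ∈ ys} := by ext r; simp
        rw [this, Ideal.span_insert, sup_comm]


lemma lengthNat_eq_toNat_len (R M : Type*) [Ring R] [AddCommGroup M] [Module R M] :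
    lengthNat R M = (len R M).toNat := rfl

/-- key inequality: `len (R⧸I) ≤ len (R⧸L) + len (R⧸(I ⊔ (x)))` when `I ≤ L ≤ (I : x)`. -/
lemma len_colon_squeeze {R : Type*} [CommRing R] (I L : Ideal R) (x : R)
    (hIL : I ≤ L) (hL : L ≤ I.colon (Ideal.span {x})) :
    len R (R ⧸ I) ≤ len R (R ⧸ L) + len R (R ⧸ (I ⊔ Ideal.span {x} : Ideal R)) := by
  set T : Ideal R := I ⊔ Ideal.span {x} with hT
  set N : Submodule R (R ⧸ I) := Submodule.map (I : Submodule R R).mkQ (T : Submodule R R)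
    with hN
  have e : ((R ⧸ I) ⧸ N) ≃ₗ[R] (R ⧸ T) :=
    Submodule.quotientQuotientEquivQuotient _ _ le_sup_left
  set v : R ⧸ I := (I : Submodule R R).mkQ x with hv
  have hvN : v ∈ N := ⟨x, Submodule.mem_sup_right (Ideal.mem_span_singleton_self x), rfl⟩
  have hNlen : len R N ≤ len R (R ⧸ L) := by
    set φ : R →ₗ[R] N := LinearMap.codRestrict N
      (LinearMap.toSpanSingleton R _ v) (fun r => Submodule.smul_mem N r hvN) with hφ
    have hker : (I.colon (Ideal.span {x}) : Submodule R R) ≤ LinearMap.ker φ := by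
      intro r hr
      have hrx : r * x ∈ I := by
        have := Ideal.mem_colon_span_singleton.mp hr
        simpa [smul_eq_mul] using this
      apply LinearMap.mem_ker.mpr
      apply Subtype.ext
      show r • v = 0
      rw [hv, ← map_smul, smul_eq_mul, Submodule.mkQ_apply, Submodule.Quotient.mk_eq_zero]
      exact hrx
    have hsurj : Function.Surjective
        (Submodule.liftQ (I.colon (Ideal.span {x}) : Submodule R R) φ hker) := by
      intro z
      obtain ⟨w, hw, hwz⟩ := z.2
      obtain ⟨a, ha, b, hb, rfl⟩ := Submodule.mem_sup.mp hw
      obtain ⟨t, rfl⟩ := Ideal.mem_span_singleton.mp hb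
      refine ⟨Submodule.Quotient.mk t, Subtype.ext ?_⟩
      show t • v = (z : R ⧸ I)
      rw [hv, ← map_smul, smul_eq_mul]
      rw [← hwz]
      have : (I : Submodule R R).mkQ (a + x * t) = (I : Submodule R R).mkQ (t * x) := by
        rw [Submodule.mkQ_apply, Submodule.mkQ_apply, Submodule.Quotient.eq]
        have : a + x * t - t * x = a := by ring
        rw [this]
        exact ha
      rw [this]
    refine le_trans (len_le_of_surjective _ hsurj) (len_quot_mono hL)
  calc len R (R ⧸ I) ≤ len R N + len R ((R ⧸ I) ⧸ N) := len_le_add N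
    _ = len R N + len R (R ⧸ T) := by rw [len_eq_of_equiv e]
    _ ≤ len R (R ⧸ L) + len R (R ⧸ T) := add_le_add hNlen le_rfl


end LDB

section

open LDB

/-- if `I_q ⊆ L_q ⊆ (I_q : x)` for a nonzerodivisor `x`, then
`0 ≤ ℓ(R/I_q) − ℓ(R/L_q) ≤ γ q^{d−1}`. -/
theorem length_difference_bound_for_colon_squeeze
    (R : Type*) [CommRing R] [IsNoetherianRing R] [IsLocalRing R]
    (d : ℕ) (hd1 : 1 ≤ d) (hd : ringKrullDim R = d)
    (p : ℕ) (hp : p.Prime)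
    (I L : ℕ → Ideal R) (c : ℕ) (hc : 0 < c)
    (hI : ∀ e : ℕ, (maximalIdeal R) ^ (c * p ^ e) ≤ I e)
    (x : R) (hx : x ∈ nonZeroDivisors R)
    (hIL : ∀ e : ℕ, I e ≤ L e)
    (hLcolon : ∀ e : ℕ, L e ≤ (I e).colon (Ideal.span {x})) :
    ∃ γ : ℝ, 0 < γ ∧ ∀ e : ℕ,
      (lengthNat R (R ⧸ L e) : ℝ) ≤ (lengthNat R (R ⧸ I e) : ℝ) ∧
      (lengthNat R (R ⧸ I e) : ℝ) - (lengthNat R (R ⧸ L e) : ℝ)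
        ≤ γ * (p : ℝ) ^ (e * (d - 1)) := by
  have hppos : (0 : ℝ) < (p : ℝ) := by exact_mod_cast hp.pos
  by_cases hxu : IsUnit x
  · -- x is a unit: L e = I e
    refine ⟨1, one_pos, fun e => ?_⟩
    have hLI : L e ≤ I e := by
      intro r hr
      have hrx : r * x ∈ I e := by
        have := Ideal.mem_colon_span_singleton.mp (hLcolon e hr)
        simpa [smul_eq_mul] using this
      obtain ⟨u, hu⟩ := hxu
      have : r = r * x * ↑u⁻¹ := by
        rw [mul_assoc, ← hu, Units.mul_inv, mul_one]
      rw [this]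
      exact Ideal.mul_mem_right _ _ hrx
    have heq : I e = L e := le_antisymm (hIL e) hLI
    rw [heq]
    constructor
    · exact le_rfl
    · simp only [sub_self, one_mul]
      positivity
  · -- x is a nonunit
    have hxm : x ∈ maximalIdeal R := hxu
    have hxavoid : ∀ q ∈ minimalPrimes R, x ∉ q := fun q hq hxq =>
      not_nonZeroDivisor_of_mem_minimalPrimes hq hxq hx
    have hspan_ne_top : Ideal.span {x} ≠ ⊤ := fun h =>
      hxu (Ideal.span_singleton_eq_top.mp h)
    haveI : Nontrivial (R ⧸ Ideal.span {x}) := Ideal.Quotient.nontrivial_iff.mpr hspan_ne_top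
    haveI : IsLocalRing (R ⧸ Ideal.span {x}) :=
      IsLocalRing.of_surjective' (Ideal.Quotient.mk _) Ideal.Quotient.mk_surjective
    have hdim' : ringKrullDim (R ⧸ Ideal.span {x}) ≤ ((d - 1 : ℕ) : WithBot ℕ∞) := by
      refine ringKrullDim_quot_le x hxavoid (d - 1) ?_
      rw [hd]
      have : ((d - 1 : ℕ) + 1 : ℕ) = d := by omega
      rw [this]
    obtain ⟨ys', k, hlen', hmem', hpow'⟩ := sop (d - 1) (R ⧸ Ideal.span {x}) hdim'
    obtain ⟨ys, hlen, hmem, hpow⟩ := pull x hxm (d - 1) k ys' hlen' hmem' hpow'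
    obtain ⟨Λ, hΛ⟩ := exists_len_pow_le (maximalIdeal R) (maximalIdeal.isMaximal R) k
    set m := maximalIdeal R with hm
    -- the uniform bound
    refine ⟨((2 * c) ^ (d - 1) * Λ : ℕ) + 1, by positivity, fun e => ?_⟩
    set n : ℕ := c * p ^ e with hn
    have hn1 : 1 ≤ n := by
      have : 1 ≤ p ^ e := Nat.one_le_pow _ _ hp.pos
      exact Nat.one_le_iff_ne_zero.mpr (by positivity)
    -- the length chain
    set K : ℕ := (n + 1) ^ ys.length * Λ with hK
    have hfil : len R (R ⧸ ((Ideal.span {r | r ∈ ys}) ^ n ⊔ Ideal.span {x} : Ideal R)) ≤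
        ((K : ℕ) : ℕ∞) := by
      have := fil m k (Λ : ℕ∞) hΛ ys (Ideal.span {x}) hpow n
      refine le_trans this ?_
      rw [hK]
      push_cast
      exact le_rfl
    have hsub : ((Ideal.span {r : R | r ∈ ys}) ^ n ⊔ Ideal.span {x} : Ideal R) ≤
        (I e ⊔ Ideal.span {x} : Ideal R) := by
      refine sup_le ?_ le_sup_right
      refine le_trans ?_ (le_sup_left : I e ≤ _)
      refine le_trans (Ideal.pow_right_mono (Ideal.span_le.mpr ?_) n) (hI e)
      intro z hz
      exact hmem z hz
    have hIe : len R (R ⧸ (I e ⊔ Ideal.span {x} : Ideal R)) ≤ ((K : ℕ) : ℕ∞) :=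
      le_trans (len_quot_mono hsub) hfil
    have hkey : len R (R ⧸ I e) ≤ len R (R ⧸ L e) + ((K : ℕ) : ℕ∞) :=
      le_trans (len_colon_squeeze (I e) (L e) x (hIL e) (hLcolon e))
        (add_le_add le_rfl hIe)
    have hmono : len R (R ⧸ L e) ≤ len R (R ⧸ I e) := len_quot_mono (hIL e)
    -- finiteness
    obtain ⟨Λe, hΛe⟩ := exists_len_pow_le m (maximalIdeal.isMaximal R) n
    have hIfin : len R (R ⧸ I e) ≠ ⊤ := by
      have hle := le_trans (len_quot_mono (hI e)) hΛe
      exact (lt_of_le_of_lt hle (ENat.coe_lt_top Λe)).ne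
    have hLfin : len R (R ⧸ L e) ≠ ⊤ :=
      fun h => hIfin (top_le_iff.mp (h ▸ hmono))
    -- convert to naturals
    have hba : lengthNat R (R ⧸ L e) ≤ lengthNat R (R ⧸ I e) := by
      rw [lengthNat_eq_toNat_len, lengthNat_eq_toNat_len]
      exact ENat.toNat_le_toNat hmono hIfin
    have hbcoe : ((lengthNat R (R ⧸ L e) : ℕ) : ℕ∞) = len R (R ⧸ L e) := by
      rw [lengthNat_eq_toNat_len]
      exact ENat.coe_toNat hLfin
    have h1 : len R (R ⧸ I e) ≤ ((lengthNat R (R ⧸ L e) + K : ℕ) : ℕ∞) := by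
      push_cast
      rw [hbcoe]
      exact hkey
    have hab : lengthNat R (R ⧸ I e) ≤ lengthNat R (R ⧸ L e) + K := by
      have h2 := ENat.toNat_le_toNat h1 (ENat.coe_ne_top _)
      rw [lengthNat_eq_toNat_len]
      simpa only [ENat.toNat_coe] using h2
    -- the numeric bound for K
    have hK2 : K ≤ (2 * c) ^ (d - 1) * Λ * (p ^ e) ^ (d - 1) := by
      rw [hK, hlen]
      have h2 : n + 1 ≤ 2 * c * p ^ e := by
        have heq2 : 2 * c * p ^ e = 2 * n := by rw [hn]; ring
        rw [heq2]
        omega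
      calc (n + 1) ^ (d - 1) * Λ ≤ (2 * c * p ^ e) ^ (d - 1) * Λ :=
            Nat.mul_le_mul_right _ (Nat.pow_le_pow_left h2 _)
        _ = (2 * c) ^ (d - 1) * (p ^ e) ^ (d - 1) * Λ := by rw [mul_pow]
        _ = (2 * c) ^ (d - 1) * Λ * (p ^ e) ^ (d - 1) := by ring
    -- real-number conclusion
    constructor
    · exact_mod_cast hba
    · have hr1 : (lengthNat R (R ⧸ I e) : ℝ) - (lengthNat R (R ⧸ L e) : ℝ) ≤ (K : ℝ) := by
        have : (lengthNat R (R ⧸ I e) : ℝ) ≤ (lengthNat R (R ⧸ L e) : ℝ) + (K : ℝ) := by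
          exact_mod_cast hab
        linarith
      refine le_trans hr1 ?_
      have hpow_eq : (p : ℝ) ^ (e * (d - 1)) = ((p ^ e : ℕ) : ℝ) ^ (d - 1) := by
        rw [pow_mul]
        push_cast
        ring
      rw [hpow_eq]
      have hKr : (K : ℝ) ≤ (((2 * c) ^ (d - 1) * Λ : ℕ) : ℝ) * ((p ^ e : ℕ) : ℝ) ^ (d - 1) := by
        have := hK2
        have hcast : ((K : ℕ) : ℝ) ≤ (((2 * c) ^ (d - 1) * Λ * (p ^ e) ^ (d - 1) : ℕ) : ℝ) := by
          exact_mod_cast this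
        refine le_trans hcast (le_of_eq ?_)
        push_cast
        ring
      refine le_trans hKr ?_
      have hbase : (0 : ℝ) ≤ ((p ^ e : ℕ) : ℝ) ^ (d - 1) := by positivity
      have hγ : (((2 * c) ^ (d - 1) * Λ : ℕ) : ℝ) ≤ (((2 * c) ^ (d - 1) * Λ : ℕ) : ℝ) + 1 := by
        linarith
      exact mul_le_mul_of_nonneg_right hγ hbase


end
end

section
/- Let (R,m) be a Noetherian local ring of prime characteristic p > 0, and let I be an ideal of R with dim(R/I) = 1. Suppose there exists a positive integer c such that m^{cq}·(I^{[q]})^{sat} ⊆ I^{[q]} for every power q = p^e of p. Then there exists a positive integer b such that m^{bq} ∩ (I^{[q]})^{sat} = m^{bq} ∩ I^{[q]} for every power q = p^e of p. -/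
open IsLocalRing

/-- The `q`-th Frobenius (bracket) power `J^{[q]}` of an ideal `J`. -/
def frobPow {R : Type*} [CommRing R] (J : Ideal R) (q : ℕ) : Ideal R :=
  Ideal.span ((fun x => x ^ q) '' (J : Set R))

/-- The saturation `J^{sat} = (J : m^∞) = {x ∈ R : m^n x ⊆ J for some n}` of an ideal `J`
of a local ring. -/
def satIdeal {R : Type*} [CommRing R] [IsLocalRing R] (J : Ideal R) : Ideal R where
  carrier := {x : R | ∃ n : ℕ, ∀ y ∈ (maximalIdeal R) ^ n, y * x ∈ J}
  zero_mem' := ⟨0, fun y _ => by simp⟩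
  add_mem' := by
    rintro a b ⟨n, hn⟩ ⟨m, hm⟩
    refine ⟨n + m, fun y hy => ?_⟩
    rw [mul_add]
    exact J.add_mem (hn y (Ideal.pow_le_pow_right (Nat.le_add_right n m) hy))
      (hm y (Ideal.pow_le_pow_right (Nat.le_add_left m n) hy))
  smul_mem' := by
    rintro cc x ⟨n, hn⟩
    refine ⟨n, fun y hy => ?_⟩
    rw [smul_eq_mul, show y * (cc * x) = cc * (y * x) by ring]
    exact J.mul_mem_left cc (hn y hy)

lemma mem_satIdeal_iff {R : Type*} [CommRing R] [IsLocalRing R] (J : Ideal R) (z : R) :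
    z ∈ satIdeal J ↔ ∃ n : ℕ, ∀ y ∈ (maximalIdeal R) ^ n, y * z ∈ J := Iff.rfl

section Aux
variable {R : Type*} [CommRing R]

/-- Binomial-type bound: `(A + (y))^k ⊆ A + (y^k)`. -/
lemma aux_sup_span_pow (A : Ideal R) (y : R) : ∀ k : ℕ,
    (A ⊔ Ideal.span {y}) ^ k ≤ A ⊔ Ideal.span {y ^ k}
  | 0 => by simp [Ideal.span_singleton_one]
  | (k+1) => by
    calc (A ⊔ Ideal.span {y}) ^ (k+1)
        = (A ⊔ Ideal.span {y}) ^ k * (A ⊔ Ideal.span {y}) := pow_succ _ _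
      _ ≤ (A ⊔ Ideal.span {y ^ k}) * (A ⊔ Ideal.span {y}) :=
          Ideal.mul_mono (aux_sup_span_pow A y k) le_rfl
      _ ≤ A ⊔ Ideal.span {y ^ (k+1)} := by
          rw [Ideal.sup_mul, Ideal.mul_sup, Ideal.mul_sup]
          refine sup_le (sup_le (Ideal.mul_le_right.trans le_sup_left)
            (Ideal.mul_le_left.trans le_sup_left))
            (sup_le (Ideal.mul_le_right.trans le_sup_left) ?_)
          rw [Ideal.span_singleton_mul_span_singleton, ← pow_succ]
          exact le_sup_right

/-- Pigeonhole: a power of a finitely generated ideal lands in the span of the `q`-th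
powers of the generators. -/
lemma aux_span_pow_le (q : ℕ) (s : Finset R) :
    (Ideal.span (s : Set R)) ^ (s.card * q + 1) ≤ Ideal.span ((fun x => x ^ q) '' (s : Set R)) := by
  classical
  induction s using Finset.induction_on with
  | empty => simp
  | @insert a s ha ih =>
    rw [Finset.card_insert_of_notMem ha, Finset.coe_insert, Ideal.span_insert,
      Set.image_insert_eq, Ideal.span_insert]
    have hexp : (s.card + 1) * q + 1 = q + (s.card * q + 1) := by ring
    rw [hexp]
    refine (Ideal.sup_pow_add_le_pow_sup_pow).trans (sup_le ?_ ?_)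
    · rw [Ideal.span_singleton_pow]
      exact le_sup_left
    · exact ih.trans le_sup_right
end Aux

section Aux2
variable (R : Type*) [CommRing R] [IsNoetherianRing R] [IsLocalRing R]

omit [IsNoetherianRing R] [IsLocalRing R] in
lemma aux_chain (I : Ideal R) (hdim : ringKrullDim (R ⧸ I) = 1) :
    ∃ P0 P1 : Ideal R, P0.IsPrime ∧ P1.IsPrime ∧ I ≤ P0 ∧ P0 < P1 := by
  have hnt : Nontrivial (R ⧸ I) := by
    by_contra h
    rw [not_nontrivial_iff_subsingleton] at h
    rw [@ringKrullDim_eq_bot_of_subsingleton _ _ h] at hdim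
    exact absurd hdim (by simp)
  obtain ⟨q0, q1, hq01⟩ : ∃ a b : PrimeSpectrum (R ⧸ I), a < b := by
    by_contra hcon
    push_neg at hcon
    have hlen : ∀ pch : LTSeries (PrimeSpectrum (R ⧸ I)), pch.length = 0 := by
      intro pch
      by_contra hl
      exact hcon _ _ (pch.step ⟨0, Nat.pos_of_ne_zero hl⟩)
    have h0 : ringKrullDim (R ⧸ I) ≤ 0 := by
      rw [ringKrullDim, Order.krullDim_eq_iSup_length]
      simp [hlen]
    rw [hdim] at h0
    exact absurd h0 (by simp)
  refine ⟨q0.asIdeal.comap (Ideal.Quotient.mk I), q1.asIdeal.comap (Ideal.Quotient.mk I),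
    Ideal.comap_isPrime _ _, Ideal.comap_isPrime _ _, ?_, ?_⟩
  · have := Ideal.ker_le_comap (K := q0.asIdeal) (Ideal.Quotient.mk I)
    rwa [Ideal.mk_ker] at this
  · refine lt_of_le_of_ne (Ideal.comap_mono hq01.le) (fun hEq => ?_)
    have := congrArg (Ideal.map (Ideal.Quotient.mk I)) hEq
    rw [Ideal.map_comap_of_surjective _ Ideal.Quotient.mk_surjective,
      Ideal.map_comap_of_surjective _ Ideal.Quotient.mk_surjective] at this
    exact hq01.ne (PrimeSpectrum.ext this)

omit [IsNoetherianRing R] in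
lemma aux_max_not_min (I : Ideal R) (hdim : ringKrullDim (R ⧸ I) = 1) :
    maximalIdeal R ∉ I.minimalPrimes := by
  intro hmem
  obtain ⟨P0, P1, hP0, hP1, hIP0, hlt⟩ := aux_chain R I hdim
  have hP0m : P0 ≤ maximalIdeal R := le_maximalIdeal hP0.ne_top
  have hmP0 : maximalIdeal R ≤ P0 := hmem.2 ⟨hP0, hIP0⟩ hP0m
  have hP1m : P1 ≤ maximalIdeal R := le_maximalIdeal hP1.ne_top
  exact absurd (hP1m.trans hmP0) (not_le_of_gt hlt)

lemma aux_avoid (I : Ideal R) (hdim : ringKrullDim (R ⧸ I) = 1) :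
    ∃ x ∈ maximalIdeal R, ∀ P ∈ I.minimalPrimes, x ∉ P := by
  classical
  by_contra h
  push_neg at h
  have hfin : I.minimalPrimes.Finite := by
    rw [Ideal.minimalPrimes_eq_comap]
    exact (minimalPrimes.finite_of_isNoetherianRing (R ⧸ I)).image _
  have hsub : ((maximalIdeal R : Ideal R) : Set R) ⊆
      ⋃ P ∈ (↑hfin.toFinset : Set (Ideal R)), (id P : Ideal R) := by
    intro z hz
    obtain ⟨P, hP, hzP⟩ := h z hz
    simp only [Set.mem_iUnion]
    exact ⟨P, ⟨hfin.mem_toFinset.mpr hP, hzP⟩⟩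
  obtain ⟨P, hPs, hmP⟩ := (Ideal.subset_union_prime (R := R) (s := hfin.toFinset) (f := id)
    ⊤ ⊤ (fun i hi _ _ => ((hfin.mem_toFinset.mp hi).1.1))).mp hsub
  have hPmin := hfin.mem_toFinset.mp hPs
  have hPm : (P : Ideal R) ≤ maximalIdeal R := le_maximalIdeal hPmin.1.1.ne_top
  have : maximalIdeal R = P := le_antisymm hmP hPm
  exact aux_max_not_min R I hdim (this ▸ hPmin)

omit [IsNoetherianRing R] in
lemma aux_radical (I : Ideal R) (hdim : ringKrullDim (R ⧸ I) = 1)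
    (x : R) (hxnot : ∀ P ∈ I.minimalPrimes, x ∉ P) :
    maximalIdeal R ≤ (I ⊔ Ideal.span {x}).radical := by
  rw [Ideal.radical_eq_sInf]
  refine le_sInf ?_
  rintro P ⟨hIxP, hPprime⟩
  have hxP : x ∈ P := hIxP (Ideal.mem_sup_right (Ideal.mem_span_singleton_self x))
  obtain ⟨p0, hp0min, hp0P⟩ := Ideal.exists_minimalPrimes_le (le_sup_left.trans hIxP)
  have hp0ne : p0 ≠ P := fun hEq => hxnot p0 hp0min (hEq ▸ hxP)
  have hPm : P ≤ maximalIdeal R := le_maximalIdeal hPprime.ne_top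
  rcases eq_or_lt_of_le hPm with hEq | hPltm
  · exact hEq.ge
  exfalso
  have hIle : I ≤ p0 := hp0min.1.2
  have hker : RingHom.ker (Ideal.Quotient.mk I) = I := Ideal.mk_ker
  have hmapprime : ∀ J : Ideal R, J.IsPrime → I ≤ J →
      (J.map (Ideal.Quotient.mk I)).IsPrime := by
    intro J hJ hIJ
    haveI := hJ
    exact Ideal.map_isPrime_of_surjective Ideal.Quotient.mk_surjective (hker.le.trans hIJ)
  have hstrict : ∀ J K : Ideal R, I ≤ J → J < K →
      J.map (Ideal.Quotient.mk I) < K.map (Ideal.Quotient.mk I) := by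
    intro J K hIJ hJK
    refine lt_of_le_of_ne (Ideal.map_mono hJK.le) (fun hEq => ?_)
    have h2 := congrArg (Ideal.comap (Ideal.Quotient.mk I)) hEq
    rw [Ideal.comap_map_of_surjective _ Ideal.Quotient.mk_surjective,
      Ideal.comap_map_of_surjective _ Ideal.Quotient.mk_surjective,
      ← RingHom.ker_eq_comap_bot, hker,
      sup_eq_left.mpr hIJ, sup_eq_left.mpr (hIJ.trans hJK.le)] at h2
    exact hJK.ne h2
  have hIP : I ≤ P := hIle.trans hp0P
  have hIm : I ≤ maximalIdeal R := hIP.trans hPm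
  set f := Ideal.Quotient.mk I
  let Q0 : PrimeSpectrum (R ⧸ I) := ⟨p0.map f, hmapprime p0 hp0min.1.1 hIle⟩
  let Q1 : PrimeSpectrum (R ⧸ I) := ⟨P.map f, hmapprime P hPprime hIP⟩
  let Q2 : PrimeSpectrum (R ⧸ I) :=
    ⟨(maximalIdeal R).map f, hmapprime _ (maximalIdeal.isMaximal R).isPrime hIm⟩
  have h01 : Q0 < Q1 := hstrict p0 P hIle (lt_of_le_of_ne hp0P hp0ne)
  have h12 : Q1 < Q2 := hstrict P (maximalIdeal R) hIP hPltm
  let sch : LTSeries (PrimeSpectrum (R ⧸ I)) :=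
    { length := 2
      toFun := ![Q0, Q1, Q2]
      step := by
        intro i
        fin_cases i
        · simpa using h01
        · simpa using h12 }
  have h2 : (2 : ℕ) ≤ ringKrullDim (R ⧸ I) := by
    have := Order.LTSeries.length_le_krullDim sch
    rw [ringKrullDim]
    exact this
  rw [hdim] at h2
  norm_num at h2
end Aux2

/-- for an ideal `I` with `dim(R/I) = 1` satisfying the condition (LC), the
saturations of the Frobenius powers agree with the Frobenius powers along powers of `m`. -/
theorem LC_implies_uniform_intersection_condition_dim_one
    (R : Type*) [CommRing R] [IsNoetherianRing R] [IsLocalRing R]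
    (p : ℕ) (hp : p.Prime) [CharP R p]
    (I : Ideal R) (hdim : ringKrullDim (R ⧸ I) = 1)
    (c : ℕ) (hc : 0 < c)
    (hLC : ∀ e : ℕ, (maximalIdeal R) ^ (c * p ^ e) * satIdeal (frobPow I (p ^ e))
      ≤ frobPow I (p ^ e)) :
    ∃ b : ℕ, 0 < b ∧ ∀ e : ℕ,
      (maximalIdeal R) ^ (b * p ^ e) ⊓ satIdeal (frobPow I (p ^ e))
        = (maximalIdeal R) ^ (b * p ^ e) ⊓ frobPow I (p ^ e) := by
  classical
  haveI : Fact p.Prime := ⟨hp⟩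
  haveI : ExpChar R p := inferInstance
  obtain ⟨x, hxM, hxnot⟩ := aux_avoid R I hdim
  have hrad := aux_radical R I hdim x hxnot
  obtain ⟨a0, ha0⟩ := Ideal.exists_pow_le_of_le_radical_of_fg hrad
    (IsNoetherian.noetherian _)
  obtain ⟨s, hs⟩ := IsNoetherian.noetherian (maximalIdeal R)
  set t := s.card with ht
  set a := a0 + 1 with ha
  have haM : (maximalIdeal R) ^ a ≤ I ⊔ Ideal.span {x} :=
    (Ideal.pow_le_pow_right (Nat.le_succ a0)).trans ha0
  set N := a * (t + 1) with hN
  have hNpos : 0 < N := Nat.mul_pos (Nat.succ_pos a0) (Nat.succ_pos t)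
  refine ⟨N * c, Nat.mul_pos hNpos hc, fun e => ?_⟩
  set q := p ^ e with hqdef
  have hq1 : 1 ≤ q := Nat.one_le_pow _ _ hp.pos
  set φ := iterateFrobenius R p e with hφ
  have hfrob : ∀ K : Ideal R, frobPow K q = K.map φ := by
    intro K
    have himg : (fun y : R => y ^ q) = ⇑φ := by
      funext y; rw [hφ, hqdef, iterateFrobenius_def]
    rw [frobPow, himg]
    rfl
  set J := I.map φ with hJ
  have hJsat : J ≤ satIdeal J := fun z hz =>
    (mem_satIdeal_iff J z).mpr ⟨0, fun y _ => J.mul_mem_left y hz⟩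
  have hLC' : (maximalIdeal R) ^ (c * q) * satIdeal J ≤ J := by
    have h := hLC e
    rw [← hqdef] at h
    rwa [hfrob I, ← hJ] at h
  have hA : ∀ k : ℕ, (maximalIdeal R) ^ (N * q * k) ≤ J ⊔ Ideal.span {x ^ (q * k)} := by
    have hle2 : (maximalIdeal R) ^ (t * q + 1) ≤ (maximalIdeal R).map φ := by
      rw [← hs]
      refine (aux_span_pow_le q s).trans ?_
      rw [Ideal.span_le]
      rintro _ ⟨y, hy, rfl⟩
      exact Ideal.mem_map_of_mem φ (Ideal.subset_span hy)
    have hle1 : (maximalIdeal R) ^ (N * q) ≤ ((maximalIdeal R) ^ (t * q + 1)) ^ a := by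
      rw [← pow_mul]
      apply Ideal.pow_le_pow_right
      calc (t * q + 1) * a ≤ ((t + 1) * q) * a := by nlinarith
        _ = N * q := by rw [hN]; ring
    have h1 : (maximalIdeal R) ^ (N * q) ≤ J ⊔ Ideal.span {x ^ q} :=
      calc (maximalIdeal R) ^ (N * q)
          ≤ ((maximalIdeal R).map φ) ^ a := hle1.trans (Ideal.pow_right_mono hle2 a)
        _ = ((maximalIdeal R) ^ a).map φ := (Ideal.map_pow ..).symm
        _ ≤ (I ⊔ Ideal.span {x}).map φ := Ideal.map_mono haM
        _ = J ⊔ Ideal.span {x ^ q} := by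
            rw [Ideal.map_sup, Ideal.map_span, Set.image_singleton]
            rfl
    intro k
    calc (maximalIdeal R) ^ (N * q * k)
        = ((maximalIdeal R) ^ (N * q)) ^ k := pow_mul ..
      _ ≤ (J ⊔ Ideal.span {x ^ q}) ^ k := Ideal.pow_right_mono h1 k
      _ ≤ J ⊔ Ideal.span {(x ^ q) ^ k} := aux_sup_span_pow ..
      _ = J ⊔ Ideal.span {x ^ (q * k)} := by rw [← pow_mul]
  rw [hfrob I, ← hJ]
  refine le_antisymm (fun u hu => ?_) (inf_le_inf_left _ hJsat)
  obtain ⟨huM, husat⟩ := Submodule.mem_inf.mp hu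
  refine Submodule.mem_inf.mpr ⟨huM, ?_⟩
  have hu2 : u ∈ J ⊔ Ideal.span {x ^ (q * c)} := by
    apply hA c
    rw [show N * q * c = N * c * q from by ring]
    exact huM
  obtain ⟨j, hjJ, w, hw, huw⟩ := Submodule.mem_sup.mp hu2
  obtain ⟨v, hv⟩ := Ideal.mem_span_singleton'.mp hw
  have hwsat : w ∈ satIdeal J := by
    have hsub : u - j ∈ satIdeal J := Submodule.sub_mem _ husat (hJsat hjJ)
    rwa [show u - j = w from by rw [← huw]; ring] at hsub
  have hxc : x ^ (c * q) ∈ (maximalIdeal R) ^ (c * q) := Ideal.pow_mem_pow hxM _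
  have h1 : x ^ (c * q) * w ∈ J := hLC' (Ideal.mul_mem_mul hxc hwsat)
  have h2 : x ^ (q * (2 * c)) * v ∈ J := by
    rw [show x ^ (q * (2 * c)) * v = x ^ (c * q) * (v * x ^ (q * c)) from by ring, hv]
    exact h1
  have hvsat : v ∈ satIdeal J := by
    refine (mem_satIdeal_iff J v).mpr ⟨N * q * (2 * c), fun y hy => ?_⟩
    have hy2 : y ∈ J ⊔ Ideal.span {x ^ (q * (2 * c))} := hA (2 * c) hy
    obtain ⟨j', hj', w', hw', hyw⟩ := Submodule.mem_sup.mp hy2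
    obtain ⟨v', hv'⟩ := Ideal.mem_span_singleton'.mp hw'
    have hyv : y * v = j' * v + v' * (x ^ (q * (2 * c)) * v) := by rw [← hyw, ← hv']; ring
    rw [hyv]
    exact J.add_mem (J.mul_mem_right v hj') (J.mul_mem_left v' h2)
  have h3 : x ^ (c * q) * v ∈ J := hLC' (Ideal.mul_mem_mul hxc hvsat)
  have hwJ : w ∈ J := by
    rw [← hv, show v * x ^ (q * c) = x ^ (c * q) * v from by ring]
    exact h3
  rw [← huw]
  exact J.add_mem hjJ hwJ
end
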